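/- Let Ω ⊆ ℝⁿ with n ≥ 2 be an open set and let u ∈ C³(Ω). Let a: [0,∞) → (0,∞) be a C¹ function, set ϑ_a(t) := t·a'(t)/a(t), and suppose −1 < i_a := inf_{t≥0} ϑ_a(t) ≤ sup_{t≥0} ϑ_a(t) < ∞. Assume moreover that the map v ↦ a(|v|) is continuously differentiable on ℝⁿ. Then there exists a constant c = c(n,i_a) > 0 such that the pointwise inequality c·a(|Du|)²·|D²u|² ≤ div(a(|Du|)²·(D²u·Du − Δu·Du)) + (div(a(|Du|)·Du))² holds everywhere in Ω. -/

import Mathlib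

set_option maxHeartbeats 4000000


open Matrix

/-- The Jacobian matrix `DX` of a vector field `X : ℝⁿ → ℝⁿ`. -/
noncomputable def jac {n : ℕ} (X : (Fin n → ℝ) → (Fin n → ℝ)) (x : Fin n → ℝ) :
    Matrix (Fin n) (Fin n) ℝ :=
  Matrix.of fun i j => fderiv ℝ X x (Pi.single j 1) i

/-- The divergence `div X = tr(DX)` of a vector field. -/
noncomputable def divg {n : ℕ} (X : (Fin n → ℝ) → (Fin n → ℝ)) (x : Fin n → ℝ) : ℝ :=
  Matrix.trace (jac X x)

/-- The gradient `Du` of a scalar function. -/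
noncomputable def grad {n : ℕ} (u : (Fin n → ℝ) → ℝ) (x : Fin n → ℝ) : Fin n → ℝ :=
  fun i => fderiv ℝ u x (Pi.single i 1)

/-- The Hessian matrix `D²u` of a scalar function. -/
noncomputable def hess {n : ℕ} (u : (Fin n → ℝ) → ℝ) (x : Fin n → ℝ) :
    Matrix (Fin n) (Fin n) ℝ :=
  Matrix.of fun i j => fderiv ℝ (fun y => fderiv ℝ u y (Pi.single i 1)) x (Pi.single j 1)

/-- The Laplacian `Δu = tr(D²u)`. -/
noncomputable def lap {n : ℕ} (u : (Fin n → ℝ) → ℝ) (x : Fin n → ℝ) : ℝ :=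
  Matrix.trace (hess u x)

/-- The Euclidean norm of a vector in `ℝⁿ`. -/
noncomputable def nrm {n : ℕ} (v : Fin n → ℝ) : ℝ := Real.sqrt (∑ i, v i ^ 2)

/-- The quantity `ϑ_a(t) = t·a'(t)/a(t)`. -/
noncomputable def vth (a : ℝ → ℝ) (t : ℝ) : ℝ := t * deriv a t / a t

lemma divg_eq_sum {n : ℕ} (X : (Fin n → ℝ) → (Fin n → ℝ)) (x : Fin n → ℝ)
    (L : Fin n → (Fin n → ℝ) →L[ℝ] ℝ)
    (h : ∀ i, HasFDerivAt (fun y => X y i) (L i) x) :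
    divg X x = ∑ i, L i (Pi.single i 1) := by
  have hX : HasFDerivAt X (ContinuousLinearMap.pi L) x :=
    hasFDerivAt_pi'' fun i => by rw [ContinuousLinearMap.proj_pi]; exact h i
  simp only [divg, jac, Matrix.trace, Matrix.diag, hX.fderiv, Matrix.of_apply,
    ContinuousLinearMap.pi_apply]



lemma alg_key {n : ℕ} (M : Fin n → Fin n → ℝ) (g : Fin n → ℝ)
    (hsym : ∀ i j, M i j = M j i) (t2 : ℝ) (ht2 : ∑ i, g i ^ 2 = t2) (ht : 0 < t2)
    (A s : ℝ) (hA : 0 < A) (ia : ℝ) (hia : -1 < ia) (hθ : ia ≤ t2 * s / A) :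
    min 1 ((1 + ia) ^ 2) * (A ^ 2 * ∑ i, ∑ j, M i j ^ 2) ≤
      A ^ 2 * (∑ i, ∑ j, M i j ^ 2) + 2 * A * s * (∑ i, (∑ k, M i k * g k) ^ 2)
        + s ^ 2 * (∑ i, g i * (∑ k, M i k * g k)) ^ 2 := by
  set b : Fin n → ℝ := fun i => ∑ k, M i k * g k with hb
  set S : ℝ := ∑ i, ∑ j, M i j ^ 2 with hS
  set B : ℝ := ∑ i, b i ^ 2 with hB
  set Q : ℝ := ∑ i, g i * b i with hQ
  set P : Fin n → ℝ := fun i => ∑ j, M i j * b j with hPdef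
  have hbrow : ∀ i, ∑ j, M i j * g j = b i := fun i => rfl
  have hrow : ∀ j, ∑ i, M i j * g i = b j := by
    intro j
    rw [← hbrow j]
    exact Finset.sum_congr rfl fun i _ => by rw [hsym]
  have hSnn : 0 ≤ S :=
    Finset.sum_nonneg fun i _ => Finset.sum_nonneg fun j _ => sq_nonneg _
  have hBnn : 0 ≤ B := Finset.sum_nonneg fun i _ => sq_nonneg _
  -- Cauchy-Schwarz: Q² ≤ t2 * B
  have hQ2 : Q ^ 2 ≤ t2 * B := by
    have := Finset.sum_mul_sq_le_sq_mul_sq Finset.univ g b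
    rw [ht2] at this
    exact this
  -- Cauchy-Schwarz rowwise: B ≤ t2 * S
  have hBS : B ≤ t2 * S := by
    have h1 : ∀ i : Fin n, b i ^ 2 ≤ (∑ k, M i k ^ 2) * t2 := by
      intro i
      rw [← ht2, hb]
      exact Finset.sum_mul_sq_le_sq_mul_sq Finset.univ (fun k => M i k) g
    calc B ≤ ∑ i, (∑ k, M i k ^ 2) * t2 := Finset.sum_le_sum fun i _ => h1 i
      _ = t2 * S := by rw [hS, ← Finset.sum_mul]; ring
  -- ∑ g i * P i = B
  have hgP : ∑ i, g i * P i = B := by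
    have h1 : ∀ i, g i * P i = ∑ j, g i * (M i j * b j) := fun i => Finset.mul_sum _ _ _
    rw [Finset.sum_congr rfl fun i _ => h1 i, Finset.sum_comm, hB]
    refine Finset.sum_congr rfl fun j _ => ?_
    calc ∑ i, g i * (M i j * b j) = (∑ i, M i j * g i) * b j := by
          rw [Finset.sum_mul]; exact Finset.sum_congr rfl fun i _ => by ring
      _ = b j ^ 2 := by rw [hrow]; ring
  -- the G-identity
  have inner : ∀ i, (∑ j, (t2 ^ 2 * M i j - t2 * (g i * b j) - t2 * (b i * g j)
        + Q * (g i * g j)) ^ 2)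
      = t2 ^ 4 * (∑ j, M i j ^ 2) - (2 * t2 ^ 3) * (g i * P i) - (2 * t2 ^ 3) * (b i ^ 2)
        + (2 * t2 ^ 2 * Q) * (g i * b i) + (t2 ^ 2 * B) * (g i ^ 2) + (t2 ^ 3) * (b i ^ 2)
        + (Q ^ 2 * t2) * (g i ^ 2) + (2 * t2 ^ 2 * Q) * (g i * b i)
        - (2 * t2 * Q ^ 2) * (g i ^ 2) - (2 * t2 ^ 2 * Q) * (g i * b i) := by
    intro i
    have step1 : (∑ j, (t2 ^ 2 * M i j - t2 * (g i * b j) - t2 * (b i * g j)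
          + Q * (g i * g j)) ^ 2)
        = t2 ^ 4 * (∑ j, M i j ^ 2) - (2 * t2 ^ 3 * g i) * (∑ j, M i j * b j)
          - (2 * t2 ^ 3 * b i) * (∑ j, M i j * g j)
          + (2 * t2 ^ 2 * Q * g i) * (∑ j, M i j * g j)
          + (t2 ^ 2 * g i ^ 2) * (∑ j, b j ^ 2)
          + (t2 ^ 2 * b i ^ 2) * (∑ j, g j ^ 2)
          + (Q ^ 2 * g i ^ 2) * (∑ j, g j ^ 2)
          + (2 * t2 ^ 2 * (g i * b i)) * (∑ j, g j * b j)
          - (2 * t2 * Q * g i ^ 2) * (∑ j, g j * b j)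
          - (2 * t2 * Q * (b i * g i)) * (∑ j, g j ^ 2) := by
      simp only [Finset.mul_sum, ← Finset.sum_add_distrib, ← Finset.sum_sub_distrib]
      exact Finset.sum_congr rfl fun j _ => by ring
    have hPi : ∑ j, M i j * b j = P i := rfl
    rw [step1, hbrow i, ht2, ← hB, ← hQ, hPi]
    ring
  have big : (∑ i, ∑ j, (t2 ^ 2 * M i j - t2 * (g i * b j) - t2 * (b i * g j)
        + Q * (g i * g j)) ^ 2)
      = t2 ^ 4 * S - 2 * t2 ^ 3 * B + t2 ^ 2 * Q ^ 2 := by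
    rw [Finset.sum_congr rfl fun i _ => inner i]
    simp only [Finset.sum_add_distrib, Finset.sum_sub_distrib, ← Finset.mul_sum]
    rw [hgP, ht2, ← hB, ← hQ, ← hS]
    ring
  have hGnn : 0 ≤ t2 ^ 4 * S - 2 * t2 ^ 3 * B + t2 ^ 2 * Q ^ 2 := by
    rw [← big]
    exact Finset.sum_nonneg fun i _ => Finset.sum_nonneg fun j _ => sq_nonneg _
  have hG : 2 * t2 * B ≤ t2 ^ 2 * S + Q ^ 2 := by
    have h1 : 0 ≤ t2 ^ 2 * (t2 ^ 2 * S - 2 * t2 * B + Q ^ 2) := by linear_combination hGnn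
    have h2 : t2 ^ 2 * 0 ≤ t2 ^ 2 * (t2 ^ 2 * S - 2 * t2 * B + Q ^ 2) := by
      rw [mul_zero]; exact h1
    have h3 := (mul_le_mul_iff_right₀ (pow_pos ht 2)).mp h2
    linarith
  -- the scalar inequality in θ
  set θ : ℝ := t2 * s / A with hθdef
  have key2 : min 1 ((1 + ia) ^ 2) * (S * t2 ^ 2) ≤ S * t2 ^ 2 + 2 * θ * t2 * B + θ ^ 2 * Q ^ 2 := by
    have hst : 0 ≤ S * t2 ^ 2 := by positivity
    rcases le_or_gt 0 θ with hpos | hneg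
    · have h1 : min 1 ((1 + ia) ^ 2) * (S * t2 ^ 2) ≤ 1 * (S * t2 ^ 2) :=
        mul_le_mul_of_nonneg_right (min_le_left _ _) hst
      nlinarith [mul_nonneg (mul_nonneg (mul_nonneg two_pos.le hpos) ht.le) hBnn,
        mul_nonneg (sq_nonneg θ) (sq_nonneg Q)]
    · have h1p : 0 < 1 + θ := by linarith
      have hQS : Q ^ 2 ≤ t2 ^ 2 * S := by nlinarith
      have step1 : θ * (t2 ^ 2 * S + Q ^ 2) ≤ 2 * θ * t2 * B := by nlinarith
      have step3 : θ * (1 + θ) * (t2 ^ 2 * S) ≤ θ * (1 + θ) * Q ^ 2 := by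
        have : θ * (1 + θ) ≤ 0 := by nlinarith
        nlinarith
      have step4 : (1 + ia) ^ 2 * (S * t2 ^ 2) ≤ (1 + θ) ^ 2 * (S * t2 ^ 2) := by
        have h1ia : 0 < 1 + ia := by linarith
        have : (1 + ia) ^ 2 ≤ (1 + θ) ^ 2 := by nlinarith
        exact mul_le_mul_of_nonneg_right this hst
      have h5 : min 1 ((1 + ia) ^ 2) * (S * t2 ^ 2) ≤ (1 + ia) ^ 2 * (S * t2 ^ 2) :=
        mul_le_mul_of_nonneg_right (min_le_right _ _) hst
      nlinarith
  -- transfer back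
  have hAne : A ≠ 0 := ne_of_gt hA
  have htne : t2 ≠ 0 := ne_of_gt ht
  have hs : s = θ * A / t2 := by rw [hθdef]; field_simp
  rw [← sub_nonneg]
  have heq : A ^ 2 * S + 2 * A * s * B + s ^ 2 * Q ^ 2 - min 1 ((1 + ia) ^ 2) * (A ^ 2 * S)
      = (A ^ 2 / t2 ^ 2) * ((S * t2 ^ 2 + 2 * θ * t2 * B + θ ^ 2 * Q ^ 2)
          - min 1 ((1 + ia) ^ 2) * (S * t2 ^ 2)) := by
    rw [hs]; field_simp
  rw [heq]
  exact mul_nonneg (by positivity) (by linarith)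



/-- the Cianchi–Maz'ya pointwise differential inequality
`c·a(|Du|)²·|D²u|² ≤ div(a(|Du|)²·(D²u·Du − Δu·Du)) + (div(a(|Du|)·Du))²`. -/
theorem stmt_16 (n : ℕ) (hn : 2 ≤ n) (Ω : Set (Fin n → ℝ)) (hΩ : IsOpen Ω)
    (u : (Fin n → ℝ) → ℝ) (hu : ContDiffOn ℝ 3 u Ω)
    (a : ℝ → ℝ) (ha : ContDiffOn ℝ 1 a (Set.Ici 0)) (hapos : ∀ t ≥ (0 : ℝ), 0 < a t)
    (ia sa : ℝ) (hia : -1 < ia)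
    (hbounds : ∀ t ≥ (0 : ℝ), ia ≤ vth a t ∧ vth a t ≤ sa)
    (hcomp : ContDiff ℝ 1 (fun v : Fin n → ℝ => a (nrm v))) :
    ∃ c : ℝ, 0 < c ∧
      ∀ x ∈ Ω,
        c * (a (nrm (grad u x))) ^ 2 * (∑ i, ∑ j, hess u x i j ^ 2) ≤
          divg (fun y => (a (nrm (grad u y))) ^ 2 •
              ((hess u y).mulVec (grad u y) - lap u y • grad u y)) x
            + (divg (fun y => a (nrm (grad u y)) • grad u y) x) ^ 2 := by
  have hc1 : (0:ℝ) < (1 + ia) ^ 2 := pow_pos (by linarith) 2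
  refine ⟨min 1 ((1 + ia) ^ 2), lt_min one_pos hc1, fun x hx => ?_⟩
  have hnx : Ω ∈ nhds x := hΩ.mem_nhds hx
  have hx3 : ContDiffAt ℝ 3 u x := (hu x hx).contDiffAt hnx
  have hF2 : ContDiffAt ℝ 2 (fderiv ℝ u) x := hx3.fderiv_right (by norm_num)
  have hF21 : ContDiffAt ℝ 1 (fderiv ℝ (fderiv ℝ u)) x := hF2.fderiv_right (by norm_num)
  have hFd : HasFDerivAt (fderiv ℝ u) (fderiv ℝ (fderiv ℝ u) x) x :=
    (hF2.differentiableAt (by norm_num)).hasFDerivAt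
  have hF2d : HasFDerivAt (fderiv ℝ (fderiv ℝ u)) (fderiv ℝ (fderiv ℝ (fderiv ℝ u)) x) x :=
    (hF21.differentiableAt one_ne_zero).hasFDerivAt
  set F2 : (Fin n → ℝ) → (Fin n → ℝ) →L[ℝ] ((Fin n → ℝ) →L[ℝ] ℝ) :=
    fderiv ℝ (fderiv ℝ u) with hF2def
  set T3 : (Fin n → ℝ) →L[ℝ] ((Fin n → ℝ) →L[ℝ] ((Fin n → ℝ) →L[ℝ] ℝ)) :=
    fderiv ℝ F2 x with hT3def
  -- gradient components
  have hgk : ∀ k : Fin n, HasFDerivAt (fun y => fderiv ℝ u y (Pi.single k 1))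
      ((ContinuousLinearMap.apply ℝ ℝ ((Pi.single k 1 : Fin n → ℝ))).comp (F2 x)) x :=
    fun k => (ContinuousLinearMap.apply ℝ ℝ
      ((Pi.single k 1 : Fin n → ℝ))).hasFDerivAt.comp x hFd
  have hgradd : HasFDerivAt (grad u)
      (ContinuousLinearMap.pi (fun k => (ContinuousLinearMap.apply ℝ ℝ
        ((Pi.single k 1 : Fin n → ℝ))).comp (F2 x))) x :=
    hasFDerivAt_pi'' fun k => by rw [ContinuousLinearMap.proj_pi]; exact hgk k
  set LG : (Fin n → ℝ) →L[ℝ] (Fin n → ℝ) :=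
    ContinuousLinearMap.pi (fun k => (ContinuousLinearMap.apply ℝ ℝ
      ((Pi.single k 1 : Fin n → ℝ))).comp (F2 x)) with hLGdef
  set M : Fin n → Fin n → ℝ :=
    fun i j => F2 x (Pi.single i 1) (Pi.single j 1) with hMdef
  have hMsymm : ∀ i j, M i j = M j i := fun i j =>
    hx3.isSymmSndFDerivAt (by norm_num) _ _
  have hT3symm : ∀ v w : Fin n → ℝ, T3 v w = T3 w v := fun v w =>
    hF2.isSymmSndFDerivAt (by norm_num) v w
  -- hessian entries in terms of F2, on Ω
  have hess_eq : ∀ y ∈ Ω, ∀ i k : Fin n,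
      hess u y i k = F2 y (Pi.single k 1) (Pi.single i 1) := by
    intro y hy i k
    have hy3 : ContDiffAt ℝ 3 u y := (hu y hy).contDiffAt (hΩ.mem_nhds hy)
    have hyF2 : ContDiffAt ℝ 2 (fderiv ℝ u) y := hy3.fderiv_right (by norm_num)
    have hyFd : HasFDerivAt (fderiv ℝ u) (F2 y) y :=
      (hyF2.differentiableAt (by norm_num)).hasFDerivAt
    have h1 : HasFDerivAt (fun z => fderiv ℝ u z (Pi.single i 1))
        ((ContinuousLinearMap.apply ℝ ℝ ((Pi.single i 1 : Fin n → ℝ))).comp (F2 y)) y :=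
      (ContinuousLinearMap.apply ℝ ℝ
        ((Pi.single i 1 : Fin n → ℝ))).hasFDerivAt.comp y hyFd
    show fderiv ℝ (fun z => fderiv ℝ u z (Pi.single i 1)) y (Pi.single k 1) = _
    rw [h1.fderiv]
    rfl
  -- derivative of the hessian entries
  have hpsi : ∀ i k : Fin n, HasFDerivAt (fun y => hess u y i k)
      ((ContinuousLinearMap.apply ℝ ℝ ((Pi.single i 1 : Fin n → ℝ))).comp
        (((ContinuousLinearMap.apply ℝ ((Fin n → ℝ) →L[ℝ] ℝ) ((Pi.single k 1 : Fin n → ℝ))).comp T3))) x := by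
    intro i k
    have h1 : HasFDerivAt (fun y => F2 y (Pi.single k 1) (Pi.single i 1))
        ((ContinuousLinearMap.apply ℝ ℝ ((Pi.single i 1 : Fin n → ℝ))).comp
          (((ContinuousLinearMap.apply ℝ ((Fin n → ℝ) →L[ℝ] ℝ) ((Pi.single k 1 : Fin n → ℝ))).comp T3))) x :=
      by
        have h5 := (hF2d.clm_apply (hasFDerivAt_const (Pi.single k 1 : Fin n → ℝ) x)).clm_apply
          (hasFDerivAt_const (Pi.single i 1 : Fin n → ℝ) x)
        refine h5.congr_fderiv ?_
        ext w
        simp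
    apply h1.congr_of_eventuallyEq
    filter_upwards [hnx] with y hy
    exact hess_eq y hy i k
  -- derivative of the laplacian
  have hlap : HasFDerivAt (fun y => lap u y)
      (∑ k, (ContinuousLinearMap.apply ℝ ℝ ((Pi.single k 1 : Fin n → ℝ))).comp
        (((ContinuousLinearMap.apply ℝ ((Fin n → ℝ) →L[ℝ] ℝ) ((Pi.single k 1 : Fin n → ℝ))).comp T3))) x := by
    have h1 : HasFDerivAt (fun y => ∑ k, hess u y k k)
        (∑ k, (ContinuousLinearMap.apply ℝ ℝ ((Pi.single k 1 : Fin n → ℝ))).comp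
          (((ContinuousLinearMap.apply ℝ ((Fin n → ℝ) →L[ℝ] ℝ) ((Pi.single k 1 : Fin n → ℝ))).comp T3))) x :=
      HasFDerivAt.fun_sum fun k _ => hpsi k k
    exact h1
  -- derivative of A := a (nrm (grad u ·))
  have hαd : HasFDerivAt (fun v : Fin n → ℝ => a (nrm v))
      (fderiv ℝ (fun v : Fin n → ℝ => a (nrm v)) (grad u x)) (grad u x) :=
    (hcomp.differentiable one_ne_zero (grad u x)).hasFDerivAt
  set Lα : (Fin n → ℝ) →L[ℝ] ℝ :=
    fderiv ℝ (fun v : Fin n → ℝ => a (nrm v)) (grad u x) with hLαdef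
  have hAd : HasFDerivAt (fun y => a (nrm (grad u y))) (Lα.comp LG) x := hαd.comp x hgradd
  have hA2d : HasFDerivAt (fun y => a (nrm (grad u y)) ^ 2)
      (((2 : ℝ) * a (nrm (grad u x))) • (Lα.comp LG)) x := by
    have h2 : (fun y => a (nrm (grad u y)) ^ 2)
        = fun y => a (nrm (grad u y)) * a (nrm (grad u y)) := by
      funext y; rw [pow_two]
    rw [h2, two_mul, add_smul]
    exact hAd.mul hAd
  set w : Fin n → ℝ := fun i => (Lα.comp LG) (Pi.single i 1) with hwdef
  -- second divergence
  have hX2 : divg (fun y => a (nrm (grad u y)) • grad u y) x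
      = ∑ i, (a (nrm (grad u x)) * M i i + grad u x i * w i) := by
    have e2 := divg_eq_sum (fun y => a (nrm (grad u y)) • grad u y) x
      (fun i => a (nrm (grad u x)) •
        ((ContinuousLinearMap.apply ℝ ℝ ((Pi.single i 1 : Fin n → ℝ))).comp (F2 x))
        + grad u x i • (Lα.comp LG)) (fun i => hAd.mul (hgk i))
    rw [e2]
    refine Finset.sum_congr rfl fun i _ => ?_
    simp only [ContinuousLinearMap.add_apply, ContinuousLinearMap.smul_apply, smul_eq_mul,
      ContinuousLinearMap.comp_apply, ContinuousLinearMap.apply_apply]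
    rfl
  -- first divergence
  have hWd : ∀ i, HasFDerivAt
      (fun y => (∑ k, hess u y i k * grad u y k) - lap u y * grad u y i)
      ((∑ k, (hess u x i k • ((ContinuousLinearMap.apply ℝ ℝ
            ((Pi.single k 1 : Fin n → ℝ))).comp (F2 x))
          + grad u x k • ((ContinuousLinearMap.apply ℝ ℝ ((Pi.single i 1 : Fin n → ℝ))).comp
            (((ContinuousLinearMap.apply ℝ ((Fin n → ℝ) →L[ℝ] ℝ)
              ((Pi.single k 1 : Fin n → ℝ))).comp T3))))) -
        (lap u x • ((ContinuousLinearMap.apply ℝ ℝ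
            ((Pi.single i 1 : Fin n → ℝ))).comp (F2 x))
          + grad u x i • (∑ k, (ContinuousLinearMap.apply ℝ ℝ
              ((Pi.single k 1 : Fin n → ℝ))).comp
            (((ContinuousLinearMap.apply ℝ ((Fin n → ℝ) →L[ℝ] ℝ)
              ((Pi.single k 1 : Fin n → ℝ))).comp T3))))) x :=
    fun i => (HasFDerivAt.fun_sum fun k _ => (hpsi i k).mul (hgk k)).sub (hlap.mul (hgk i))
  have hX1 : divg (fun y => (a (nrm (grad u y))) ^ 2 •
        ((hess u y).mulVec (grad u y) - lap u y • grad u y)) x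
      = ∑ i, (a (nrm (grad u x)) ^ 2 *
            ((∑ k, (hess u x i k * M i k
              + grad u x k * T3 (Pi.single i 1) (Pi.single k 1) (Pi.single i 1)))
            - (lap u x * M i i
              + grad u x i * ∑ k, T3 (Pi.single i 1) (Pi.single k 1) (Pi.single k 1)))
          + ((∑ k, hess u x i k * grad u x k) - lap u x * grad u x i)
            * (2 * a (nrm (grad u x)) * w i)) := by
    have e1 := divg_eq_sum (fun y => (a (nrm (grad u y))) ^ 2 •
        ((hess u y).mulVec (grad u y) - lap u y • grad u y)) x
      _ (fun i => hA2d.mul (hWd i))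
    rw [e1]
    refine Finset.sum_congr rfl fun i _ => ?_
    simp only [ContinuousLinearMap.add_apply, ContinuousLinearMap.sub_apply,
      ContinuousLinearMap.sum_apply, ContinuousLinearMap.smul_apply, smul_eq_mul,
      ContinuousLinearMap.comp_apply, ContinuousLinearMap.apply_apply]
    rfl
  -- hessian at x in terms of M
  have hessMx : ∀ i k : Fin n, hess u x i k = M i k := by
    intro i k
    rw [hess_eq x hx i k]
    exact hMsymm k i
  have hlapM : lap u x = ∑ k, M k k := by
    show Matrix.trace (hess u x) = _
    rw [Matrix.trace]
    exact Finset.sum_congr rfl fun k _ => hessMx k k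
  -- cancellation of third derivatives
  have hcancel : (∑ i, ∑ k, grad u x k *
        T3 (Pi.single i 1) (Pi.single k 1) (Pi.single i 1))
      = ∑ i, grad u x i *
        ∑ k, T3 (Pi.single i 1) (Pi.single k 1) (Pi.single k 1) := by
    calc (∑ i, ∑ k, grad u x k * T3 (Pi.single i 1) (Pi.single k 1) (Pi.single i 1))
        = ∑ i, ∑ k, grad u x k * T3 (Pi.single k 1) (Pi.single i 1) (Pi.single i 1) :=
          Finset.sum_congr rfl fun i _ => Finset.sum_congr rfl fun k _ => by
            rw [hT3symm]
      _ = ∑ k, ∑ i, grad u x k * T3 (Pi.single k 1) (Pi.single i 1) (Pi.single i 1) :=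
          Finset.sum_comm
      _ = ∑ i, grad u x i * ∑ k, T3 (Pi.single i 1) (Pi.single k 1) (Pi.single k 1) := by
          exact Finset.sum_congr rfl fun i _ => by rw [Finset.mul_sum]
  -- the key algebraic reduction of the right-hand side
  have claim1 : divg (fun y => (a (nrm (grad u y))) ^ 2 •
        ((hess u y).mulVec (grad u y) - lap u y • grad u y)) x
      + (divg (fun y => a (nrm (grad u y)) • grad u y) x) ^ 2
      = a (nrm (grad u x)) ^ 2 * (∑ i, ∑ k, M i k * M i k)
        + 2 * a (nrm (grad u x)) * (∑ i, w i * (∑ k, M i k * grad u x k))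
        + (∑ i, grad u x i * w i) ^ 2 := by
    rw [hX1, hX2]
    simp only [hessMx, hlapM]
    have h1 : ∀ i : Fin n, (a (nrm (grad u x)) ^ 2 *
          ((∑ k, (M i k * M i k
            + grad u x k * T3 (Pi.single i 1) (Pi.single k 1) (Pi.single i 1)))
          - ((∑ k, M k k) * M i i
            + grad u x i * ∑ k, T3 (Pi.single i 1) (Pi.single k 1) (Pi.single k 1)))
        + ((∑ k, M i k * grad u x k) - (∑ k, M k k) * grad u x i)
          * (2 * a (nrm (grad u x)) * w i))
        = a (nrm (grad u x)) ^ 2 * (∑ k, M i k * M i k)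
          + a (nrm (grad u x)) ^ 2 *
            (∑ k, grad u x k * T3 (Pi.single i 1) (Pi.single k 1) (Pi.single i 1))
          - (a (nrm (grad u x)) ^ 2 * (∑ k, M k k)) * (M i i)
          - a (nrm (grad u x)) ^ 2 *
            (grad u x i * ∑ k, T3 (Pi.single i 1) (Pi.single k 1) (Pi.single k 1))
          + (2 * a (nrm (grad u x))) * (w i * (∑ k, M i k * grad u x k))
          - (2 * a (nrm (grad u x)) * (∑ k, M k k)) * (grad u x i * w i) := by
      intro i
      rw [Finset.sum_add_distrib]
      ring
    rw [Finset.sum_congr rfl fun i _ => h1 i]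
    simp only [Finset.sum_add_distrib, Finset.sum_sub_distrib, ← Finset.mul_sum]
    rw [hcancel]
    ring
  rw [claim1]
  have hS : (∑ i, ∑ j, hess u x i j ^ 2) = ∑ i, ∑ j, M i j ^ 2 := by
    exact Finset.sum_congr rfl fun i _ => Finset.sum_congr rfl fun j _ => by rw [hessMx]
  have hSS : (∑ i, ∑ j, M i j ^ 2) = ∑ i, ∑ j, M i j * M i j :=
    Finset.sum_congr rfl fun i _ => Finset.sum_congr rfl fun j _ => by rw [pow_two]
  rw [hS]
  have hSnn : (0:ℝ) ≤ ∑ i, ∑ j, M i j ^ 2 :=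
    Finset.sum_nonneg fun i _ => Finset.sum_nonneg fun j _ => sq_nonneg _
  rcases (Finset.sum_nonneg fun i (_ : i ∈ Finset.univ) =>
      sq_nonneg (grad u x i)).eq_or_lt with h0 | h0
  · -- the gradient vanishes at x
    have hg0 : ∀ i, grad u x i = 0 := by
      intro i
      have h := (Finset.sum_eq_zero_iff_of_nonneg
        (fun i _ => sq_nonneg (grad u x i))).1 h0.symm i (Finset.mem_univ i)
      exact sq_eq_zero_iff.mp h
    have hwb : (∑ i, w i * (∑ k, M i k * grad u x k)) = 0 :=
      Finset.sum_eq_zero fun i _ => by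
        rw [Finset.sum_eq_zero fun k _ => by rw [hg0 k, mul_zero], mul_zero]
    have hgw : (∑ i, grad u x i * w i) = 0 :=
      Finset.sum_eq_zero fun i _ => by rw [hg0 i, zero_mul]
    rw [hwb, hgw, ← hSS]
    have hmin : min 1 ((1 + ia) ^ 2) ≤ 1 := min_le_left _ _
    nlinarith [mul_le_mul_of_nonneg_right hmin
      (mul_nonneg (sq_nonneg (a (nrm (grad u x)))) hSnn)]
  · -- nonvanishing gradient
    have ht : 0 < nrm (grad u x) := Real.sqrt_pos.2 h0
    have htne : nrm (grad u x) ≠ 0 := ne_of_gt ht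
    have hApos : 0 < a (nrm (grad u x)) := hapos _ (Real.sqrt_nonneg _)
    -- derivative of the norm-squared
    have hsq_i : ∀ i : Fin n, HasFDerivAt (fun v : Fin n → ℝ => v i ^ 2)
        (((2:ℝ) * grad u x i) • (ContinuousLinearMap.proj i : (Fin n → ℝ) →L[ℝ] ℝ)) (grad u x) := by
      intro i
      have h2 : (fun v : Fin n → ℝ => v i ^ 2) = fun v => v i * v i := by
        funext v; rw [pow_two]
      rw [h2, two_mul, add_smul]
      exact (hasFDerivAt_apply i (grad u x)).mul (hasFDerivAt_apply i (grad u x))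
    have hsum : HasFDerivAt (fun v : Fin n → ℝ => ∑ i, v i ^ 2)
        (∑ i, ((2:ℝ) * grad u x i) • (ContinuousLinearMap.proj i : (Fin n → ℝ) →L[ℝ] ℝ)) (grad u x) :=
      HasFDerivAt.fun_sum fun i _ => hsq_i i
    have hsqrt : HasFDerivAt nrm
        ((1 / (2 * Real.sqrt (∑ i, grad u x i ^ 2))) •
          ∑ i, ((2:ℝ) * grad u x i) • (ContinuousLinearMap.proj i : (Fin n → ℝ) →L[ℝ] ℝ)) (grad u x) :=
      (Real.hasDerivAt_sqrt (ne_of_gt h0)).comp_hasFDerivAt (grad u x) hsum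
    have hat : HasDerivAt a (deriv a (nrm (grad u x))) (nrm (grad u x)) := by
      have h1 : ContDiffAt ℝ 1 a (nrm (grad u x)) := ha.contDiffAt (Ici_mem_nhds ht)
      exact (h1.differentiableAt one_ne_zero).hasDerivAt
    have hα2 : HasFDerivAt (fun v : Fin n → ℝ => a (nrm v))
        (deriv a (nrm (grad u x)) •
          ((1 / (2 * Real.sqrt (∑ i, grad u x i ^ 2))) •
            ∑ i, ((2:ℝ) * grad u x i) • (ContinuousLinearMap.proj i : (Fin n → ℝ) →L[ℝ] ℝ))) (grad u x) :=
      hat.comp_hasFDerivAt (grad u x) hsqrt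
    have hLαeq : Lα = deriv a (nrm (grad u x)) •
        ((1 / (2 * Real.sqrt (∑ i, grad u x i ^ 2))) •
          ∑ i, ((2:ℝ) * grad u x i) • (ContinuousLinearMap.proj i : (Fin n → ℝ) →L[ℝ] ℝ)) := hαd.unique hα2
    have hLGi : ∀ i, LG (Pi.single i 1) = fun k => M i k := fun i => rfl
    have hw : ∀ i, w i = (deriv a (nrm (grad u x)) / nrm (grad u x)) *
        (∑ k, M i k * grad u x k) := by
      intro i
      have h1 : w i = Lα (LG (Pi.single i 1)) := rfl
      rw [h1, hLGi i, hLαeq]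
      simp only [ContinuousLinearMap.smul_apply, smul_eq_mul,
        ContinuousLinearMap.sum_apply, ContinuousLinearMap.proj_apply]
      have hsum2 : (∑ k, 2 * grad u x k * M i k) = 2 * ∑ k, M i k * grad u x k := by
        rw [Finset.mul_sum]; exact Finset.sum_congr rfl fun k _ => by ring
      rw [hsum2]
      have hsro : Real.sqrt (∑ i, grad u x i ^ 2) = nrm (grad u x) := rfl
      rw [hsro]
      field_simp
    -- substitute w
    have hwb : (∑ i, w i * (∑ k, M i k * grad u x k))
        = (deriv a (nrm (grad u x)) / nrm (grad u x)) *
          ∑ i, (∑ k, M i k * grad u x k) ^ 2 := by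
      rw [Finset.mul_sum]
      exact Finset.sum_congr rfl fun i _ => by rw [hw i]; ring
    have hgw : (∑ i, grad u x i * w i)
        = (deriv a (nrm (grad u x)) / nrm (grad u x)) *
          ∑ i, grad u x i * (∑ k, M i k * grad u x k) := by
      rw [Finset.mul_sum]
      exact Finset.sum_congr rfl fun i _ => by rw [hw i]; ring
    rw [hwb, hgw, ← hSS]
    -- the bound on ϑ
    have hts : nrm (grad u x) ^ 2 = ∑ i, grad u x i ^ 2 :=
      Real.sq_sqrt (Finset.sum_nonneg fun i _ => sq_nonneg _)
    have hθ : ia ≤ (∑ i, grad u x i ^ 2) *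
        (deriv a (nrm (grad u x)) / nrm (grad u x)) / a (nrm (grad u x)) := by
      have heq : (∑ i, grad u x i ^ 2) *
          (deriv a (nrm (grad u x)) / nrm (grad u x)) / a (nrm (grad u x))
          = vth a (nrm (grad u x)) := by
        rw [vth, ← hts]
        field_simp
      rw [heq]
      exact (hbounds _ (Real.sqrt_nonneg _)).1
    have halg := alg_key M (grad u x) hMsymm (∑ i, grad u x i ^ 2) rfl h0
      (a (nrm (grad u x))) (deriv a (nrm (grad u x)) / nrm (grad u x)) hApos ia hia hθ
    calc min 1 ((1 + ia) ^ 2) * a (nrm (grad u x)) ^ 2 * (∑ i, ∑ j, M i j ^ 2)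
        = min 1 ((1 + ia) ^ 2) * (a (nrm (grad u x)) ^ 2 * ∑ i, ∑ j, M i j ^ 2) := by
          ring
      _ ≤ a (nrm (grad u x)) ^ 2 * (∑ i, ∑ j, M i j ^ 2)
            + 2 * a (nrm (grad u x)) * (deriv a (nrm (grad u x)) / nrm (grad u x)) *
              (∑ i, (∑ k, M i k * grad u x k) ^ 2)
            + (deriv a (nrm (grad u x)) / nrm (grad u x)) ^ 2 *
              (∑ i, grad u x i * (∑ k, M i k * grad u x k)) ^ 2 := halg
      _ = a (nrm (grad u x)) ^ 2 * (∑ i, ∑ j, M i j ^ 2)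
            + 2 * a (nrm (grad u x)) * ((deriv a (nrm (grad u x)) / nrm (grad u x)) *
              ∑ i, (∑ k, M i k * grad u x k) ^ 2)
            + ((deriv a (nrm (grad u x)) / nrm (grad u x)) *
              ∑ i, grad u x i * (∑ k, M i k * grad u x k)) ^ 2 := by
          ring
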